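/- In a random DFA where each state is independently accepting with probability 1/2, if p and q are states and w_1, ..., w_m are words such that the 2m states δ(p, w_1), ..., δ(p, w_m), δ(q, w_1), ..., δ(q, w_m) satisfy δ(p, w_i) ≠ δ(q, w_i) for each i and the states δ(p, w_1), ..., δ(p, w_m) are pairwise distinct, and moreover the bipartite 'distinguishing graph' on these states (edges {δ(p,w_i), δ(q,w_i)}) contains a matching of size m, then the probability (over the random accepting set) that no word w_i distinguishes p from q is at most 2^{-m}. -/

import Mathlib

open MeasureTheory ENNReal

theorem matching_words_equivalence_prob (n k m : ℕ) (hn : 0 < n)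
    (δ : Fin n → Fin k → Fin n) (p q : Fin n) (w : Fin m → List (Fin k))
    (hne : ∀ i : Fin m, (w i).foldl δ p ≠ (w i).foldl δ q)
    (hinj : Function.Injective fun i : Fin m => (w i).foldl δ p)
    (hmatch : ∀ i j : Fin m, i ≠ j →
      Disjoint ({(w i).foldl δ p, (w i).foldl δ q} : Finset (Fin n))
        ({(w j).foldl δ p, (w j).foldl δ q} : Finset (Fin n))) :
    haveI : Nonempty (Fin n) := ⟨⟨0, hn⟩⟩
    (PMF.uniformOfFintype (Fin n → Bool)).toMeasure
        {A | ∀ i : Fin m, A ((w i).foldl δ p) = A ((w i).foldl δ q)} ≤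
      (2 : ℝ≥0∞)⁻¹ ^ m := by
  haveI : Nonempty (Fin n) := ⟨⟨0, hn⟩⟩
  classical
  set a : Fin m → Fin n := fun i => (w i).foldl δ p with ha
  set b : Fin m → Fin n := fun i => (w i).foldl δ q with hb
  -- basic facts
  have hab : ∀ i j : Fin m, a i ≠ b j := by
    intro i j
    rcases eq_or_ne i j with rfl | hij
    · exact hne i
    · intro h
      have h1 : a i ∈ ({a i, b i} : Finset (Fin n)) := by simp
      have h2 : a i ∈ ({a j, b j} : Finset (Fin n)) := by simp [h]
      exact (Finset.disjoint_left.mp (hmatch i j hij) h1) h2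
  have hbinj : Function.Injective b := by
    intro i j h
    by_contra hij
    have h1 : b i ∈ ({a i, b i} : Finset (Fin n)) := by simp
    have h2 : b i ∈ ({a j, b j} : Finset (Fin n)) := by simp [h]
    exact (Finset.disjoint_left.mp (hmatch i j hij) h1) h2
  set S : Set (Fin n → Bool) := {A | ∀ i : Fin m, A (a i) = A (b i)} with hS
  -- the injection
  let Φ : S × (Fin m → Bool) → (Fin n → Bool) := fun x y =>
    if h : ∃ i, b i = y then xor (x.2 h.choose) (x.1.1 y) else x.1.1 y
  have hΦb : ∀ (x : S × (Fin m → Bool)) (i : Fin m),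
      Φ x (b i) = xor (x.2 i) (x.1.1 (b i)) := by
    intro x i
    have h : ∃ j, b j = b i := ⟨i, rfl⟩
    have : h.choose = i := hbinj h.choose_spec
    simp only [Φ, dif_pos h, this]
  have hΦn : ∀ (x : S × (Fin m → Bool)) (y : Fin n), (¬ ∃ i, b i = y) →
      Φ x y = x.1.1 y := by
    intro x y h
    simp only [Φ, dif_neg h]
  have hΦinj : Function.Injective Φ := by
    intro x x' hxx
    have hA : x.1.1 = x'.1.1 := by
      funext y
      by_cases h : ∃ i, b i = y
      · obtain ⟨i, rfl⟩ := h
        have h1 : x.1.1 (a i) = x.1.1 (b i) := x.1.2 i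
        have h2 : x'.1.1 (a i) = x'.1.1 (b i) := x'.1.2 i
        have hno : ¬ ∃ j, b j = a i := by
          rintro ⟨j, hj⟩; exact hab i j hj.symm
        have := congrFun hxx (a i)
        rw [hΦn x _ hno, hΦn x' _ hno] at this
        rw [← h1, ← h2, this]
      · have := congrFun hxx y
        rwa [hΦn x _ h, hΦn x' _ h] at this
    have hε : x.2 = x'.2 := by
      funext i
      have := congrFun hxx (b i)
      rw [hΦb x i, hΦb x' i, hA] at this
      exact Bool.xor_left_inj.mp this
    exact Prod.ext (Subtype.ext hA) hε
  have hcard : Fintype.card S * 2 ^ m ≤ 2 ^ n := by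
    have := Fintype.card_le_of_injective Φ hΦinj
    simpa [Fintype.card_prod, Fintype.card_fun] using this
  have hmeas : MeasurableSet S := by
    rw [hS, Set.setOf_forall]
    apply MeasurableSet.iInter
    intro i
    exact measurableSet_eq_fun (measurable_pi_apply (a i)) (measurable_pi_apply (b i))
  rw [PMF.toMeasure_uniformOfFintype_apply _ hmeas]
  have hcardα : (Fintype.card (Fin n → Bool) : ℝ≥0∞) = 2 ^ n := by
    simp [Fintype.card_fun]
  rw [hcardα]
  rw [ENNReal.div_le_iff (by positivity) (by simp [ENNReal.pow_ne_top])]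
  have hcard' : Nat.card S * 2 ^ m ≤ 2 ^ n := by
    rwa [Nat.card_eq_fintype_card]
  have key : (Nat.card S : ℝ≥0∞) ≤ 2⁻¹ ^ m * 2 ^ n := by
    calc (Nat.card S : ℝ≥0∞) = Nat.card S * 2 ^ m * (2 ^ m)⁻¹ := by
          rw [mul_assoc, ENNReal.mul_inv_cancel (by positivity) (by simp), mul_one]
      _ ≤ 2 ^ n * (2 ^ m)⁻¹ := by
          gcongr
          exact_mod_cast hcard'
      _ = 2⁻¹ ^ m * 2 ^ n := by
          rw [ENNReal.inv_pow, mul_comm]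
  convert key using 2
  rw [Nat.card_eq_fintype_card]
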